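/- Let k be a field and let x, z ∈ k with x ≠ 0, x ≠ −1, z ≠ 0. In k^3, set a = span(e_1), A = ker(0,0,1), b = span(e_3), B = ker(1,0,0), c = span((1,−1,1)), C = ker(1,1+x,x), and B' = ker(z,1,0). Then: (1) the line A ∩ C is spanned by (1+x, −1, 0); (2) the plane spanned by b and A ∩ C equals ker(1, 1+x, 0); (3) the four planes B, span(b, A∩C), span(a,b), B' all contain the line b, and the cross-ratio of the corresponding covectors (1,0,0), (1,1+x,0), (0,1,0), (z,1,0) — computed in the 2-dimensional space of covectors vanishing on b, with the convention ⟨α1,α2,α3,α4⟩ = (α1∧α2)(α3∧α4) / ((α2∧α3)(α4∧α1)) where (p,q,0)∧(r,s,0) := ps − qr — equals z(1+x). -/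

import Mathlib

open Submodule LinearMap

/-- The covector `(p, q, r)` on `k^3`. -/
noncomputable def cov {k : Type*} [Field k] (p q r : k) : (Fin 3 → k) →ₗ[k] k :=
  p • (LinearMap.proj 0 : (Fin 3 → k) →ₗ[k] k) +
  q • (LinearMap.proj 1 : (Fin 3 → k) →ₗ[k] k) +
  r • (LinearMap.proj 2 : (Fin 3 → k) →ₗ[k] k)

/-- The wedge `(p,q,0) ∧ (r,s,0) = ps − qr` of two covectors vanishing on `b = ⟨e₃⟩`. -/
def wedge2 {k : Type*} [Field k] (p q r s : k) : k := p * s - q * r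

lemma cov_apply {k : Type*} [Field k] (p q r : k) (v : Fin 3 → k) :
    cov p q r v = p * v 0 + q * v 1 + r * v 2 := by
  simp [cov]

lemma part1 {k : Type*} [Field k] (x : k) :
    (ker (cov (0:k) 0 1) ⊓ ker (cov (1:k) (1+x) x)
      = span k {(![1+x, -1, 0] : Fin 3 → k)}) := by
  ext v
  simp only [Submodule.mem_inf, LinearMap.mem_ker, cov_apply, mem_span_singleton]
  constructor
  · rintro ⟨h1, h2⟩
    refine ⟨-v 1, funext fun i => ?_⟩
    fin_cases i <;> simp <;>
      first
        | linear_combination -h2 + x * h1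
        | linear_combination -h1
  · rintro ⟨a, rfl⟩
    constructor <;> simp <;> ring

/-- The cluster X-transformation computation for a Legendrian mutation at a Y-cycle:
with `a = ⟨e₁⟩`, `A = ker(0,0,1)`, `b = ⟨e₃⟩`, `B = ker(1,0,0)`, `c = ⟨(1,−1,1)⟩`,
`C = ker(1,1+x,x)`, `B' = ker(z,1,0)`, the line `A ∩ C` is spanned by `(1+x,−1,0)`,
the plane spanned by `b` and `A ∩ C` is `ker(1,1+x,0)`, the four planes
`B`, `span(b, A∩C)`, `span(a,b)`, `B'` all contain `b`, and the cross-ratio of the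
corresponding covectors equals `z(1+x)`. -/
theorem mutation_cross_ratio (k : Type*) [Field k] (x z : k)
    (hx0 : x ≠ 0) (hx1 : x ≠ -1) (hz : z ≠ 0) :
    -- (1) the line A ∩ C is spanned by (1+x, −1, 0)
    (ker (cov (0:k) 0 1) ⊓ ker (cov (1:k) (1+x) x)
      = span k {(![1+x, -1, 0] : Fin 3 → k)}) ∧
    -- (2) the plane spanned by b and A ∩ C equals ker(1, 1+x, 0)
    (span k {(![0,0,1] : Fin 3 → k)} ⊔ (ker (cov (0:k) 0 1) ⊓ ker (cov (1:k) (1+x) x))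
      = ker (cov (1:k) (1+x) 0)) ∧
    -- span(a, b) = ker(0,1,0)
    (span k {(![1,0,0] : Fin 3 → k)} ⊔ span k {(![0,0,1] : Fin 3 → k)}
      = ker (cov (0:k) 1 0)) ∧
    -- (3) the four planes all contain the line b
    (span k {(![0,0,1] : Fin 3 → k)} ≤ ker (cov (1:k) 0 0) ∧
     span k {(![0,0,1] : Fin 3 → k)} ≤ ker (cov (1:k) (1+x) 0) ∧
     span k {(![0,0,1] : Fin 3 → k)} ≤ ker (cov (0:k) 1 0) ∧
     span k {(![0,0,1] : Fin 3 → k)} ≤ ker (cov z 1 0)) ∧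
    -- and the cross-ratio ⟨(1,0), (1,1+x), (0,1), (z,1)⟩ equals z(1+x)
    (wedge2 (1:k) 0 1 (1+x) * wedge2 (0:k) 1 z 1
        / (wedge2 (1:k) (1+x) 0 1 * wedge2 z 1 1 0) = z * (1+x)) := by
  refine ⟨part1 x, ?_, ?_, ⟨?_, ?_, ?_, ?_⟩, ?_⟩
  · rw [part1 x, ← span_union, Set.singleton_union]
    ext v
    simp only [mem_span_pair, LinearMap.mem_ker, cov_apply]
    constructor
    · rintro ⟨a, b, rfl⟩
      simp
      ring
    · intro h
      refine ⟨v 2, -v 1, funext fun i => ?_⟩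
      fin_cases i <;> simp <;>
        first
          | linear_combination -h
          | rfl
  · rw [← span_union, Set.singleton_union]
    ext v
    simp only [mem_span_pair, LinearMap.mem_ker, cov_apply]
    constructor
    · rintro ⟨a, b, rfl⟩
      simp
    · intro h
      refine ⟨v 0, v 2, funext fun i => ?_⟩
      fin_cases i <;> simp <;>
        first
          | linear_combination -h
          | rfl
  all_goals try
    · rw [span_le, Set.singleton_subset_iff]
      simp [LinearMap.mem_ker, cov_apply]
  · unfold wedge2; field_simp
    ring
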